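/- Let U ⊆ ℝ × ℝ be open and convex, let Q, ν, u₁, u₂ : U → E be smooth with ‖u₁ k‖ = 1, ‖u₂ k‖ = 1, ‖ν k‖ = 1 and ⟪ν k, Dᵢ Q k⟫ = 0 for all k ∈ U and i = 1, 2, and let n₁, n₂ be positive real numbers such that n₂ • (u₂ k − ⟪u₂ k, ν k⟫ • ν k) = n₁ • (u₁ k − ⟪u₁ k, ν k⟫ • ν k) for all k ∈ U. If the incident family (Q, u₁) is normal, then the refracted family (Q, u₂) is normal. (Malus' theorem for a single refraction through a smooth surface separating transparent media of refractive indices n₁ and n₂.) -/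

import Mathlib

open RealInnerProductSpace

noncomputable section

/-- The Euclidean affine space in which light propagates. -/
abbrev E : Type := EuclideanSpace ℝ (Fin 3)

/-- Partial derivative in the first coordinate direction of `ℝ × ℝ`. -/
def D1 {F : Type*} [NormedAddCommGroup F] [NormedSpace ℝ F] (f : ℝ × ℝ → F) (k : ℝ × ℝ) : F :=
  fderiv ℝ f k (1, 0)

/-- Partial derivative in the second coordinate direction of `ℝ × ℝ`. -/
def D2 {F : Type*} [NormedAddCommGroup F] [NormedSpace ℝ F] (f : ℝ × ℝ → F) (k : ℝ × ℝ) : F :=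
  fderiv ℝ f k (0, 1)

/-- A rank-2 family of oriented lines `(P, u)` is *normal* if there is a smooth
function `lam` such that the surface `k ↦ P k + lam k • u k` is orthogonal to all
the lines of the family. -/
def IsNormal (U : Set (ℝ × ℝ)) (P u : ℝ × ℝ → E) : Prop :=
  ∃ lam : ℝ × ℝ → ℝ, ContDiffOn ℝ (⊤ : ℕ∞) lam U ∧
    ∀ k ∈ U, ⟪u k, D1 (fun k => P k + lam k • u k) k⟫ = 0 ∧
             ⟪u k, D2 (fun k => P k + lam k • u k) k⟫ = 0

/-- A unit-norm family is orthogonal to its derivative. -/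
lemma unit_deriv_orth {g : ℝ × ℝ → E} {U : Set (ℝ × ℝ)} (hU : IsOpen U)
    {k : ℝ × ℝ} (hk : k ∈ U) (hg : DifferentiableAt ℝ g k)
    (hunit : ∀ x ∈ U, ‖g x‖ = 1) (v : ℝ × ℝ) :
    ⟪g k, fderiv ℝ g k v⟫ = 0 := by
  have hconst : (fun x => ⟪g x, g x⟫) =ᶠ[nhds k] fun _ => (1 : ℝ) := by
    filter_upwards [hU.mem_nhds hk] with x hx
    rw [real_inner_self_eq_norm_sq, hunit x hx]; norm_num
  have h0 : fderiv ℝ (fun x => ⟪g x, g x⟫) k = 0 := by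
    rw [hconst.fderiv_eq]; exact fderiv_const_apply 1
  have h1 := fderiv_inner_apply ℝ hg hg v
  rw [h0] at h1
  simp only [ContinuousLinearMap.zero_apply] at h1
  have h2 : ⟪fderiv ℝ g k v, g k⟫ = ⟪g k, fderiv ℝ g k v⟫ := real_inner_comm _ _
  linarith [h1, h2]

/-- Expansion of the key inner product. -/
lemma inner_fderiv_add_smul
    (Q : ℝ × ℝ → E) (f : ℝ × ℝ → ℝ) (g : ℝ × ℝ → E) (k v : ℝ × ℝ)
    (hQ : DifferentiableAt ℝ Q k) (hf : DifferentiableAt ℝ f k)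
    (hg : DifferentiableAt ℝ g k) :
    ⟪g k, fderiv ℝ (fun k => Q k + f k • g k) k v⟫ =
      ⟪g k, fderiv ℝ Q k v⟫ + fderiv ℝ f k v * ⟪g k, g k⟫ +
        f k * ⟪g k, fderiv ℝ g k v⟫ := by
  have h1 : DifferentiableAt ℝ (fun k => f k • g k) k := hf.smul hg
  rw [fderiv_fun_add hQ h1, ContinuousLinearMap.add_apply, fderiv_fun_smul hf hg]
  simp only [ContinuousLinearMap.add_apply, ContinuousLinearMap.coe_smul',
    Pi.smul_apply, ContinuousLinearMap.smulRight_apply]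
  rw [inner_add_right, inner_add_right, real_inner_smul_right, real_inner_smul_right]
  ring

theorem malus_single_refraction
    (U : Set (ℝ × ℝ)) (hU : IsOpen U) (hconv : Convex ℝ U)
    (Q nu u₁ u₂ : ℝ × ℝ → E)
    (hQ : ContDiffOn ℝ (⊤ : ℕ∞) Q U) (hnu : ContDiffOn ℝ (⊤ : ℕ∞) nu U)
    (hu₁ : ContDiffOn ℝ (⊤ : ℕ∞) u₁ U) (hu₂ : ContDiffOn ℝ (⊤ : ℕ∞) u₂ U)
    (hu₁unit : ∀ k ∈ U, ‖u₁ k‖ = 1) (hu₂unit : ∀ k ∈ U, ‖u₂ k‖ = 1)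
    (hnunit : ∀ k ∈ U, ‖nu k‖ = 1)
    (horth : ∀ k ∈ U, ⟪nu k, D1 Q k⟫ = 0 ∧ ⟪nu k, D2 Q k⟫ = 0)
    (n₁ n₂ : ℝ) (hn₁ : 0 < n₁) (hn₂ : 0 < n₂)
    (hsnell : ∀ k ∈ U,
      n₂ • (u₂ k - ⟪u₂ k, nu k⟫ • nu k) = n₁ • (u₁ k - ⟪u₁ k, nu k⟫ • nu k))
    (hnormal : IsNormal U Q u₁) :
    IsNormal U Q u₂ := by
  obtain ⟨lam, hlam, hlam0⟩ := hnormal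
  refine ⟨fun k => (n₁ / n₂) * lam k, (contDiffOn_const.mul hlam), ?_⟩
  intro k hk
  -- differentiability at k
  have hQd : DifferentiableAt ℝ Q k :=
    (hQ.contDiffAt (hU.mem_nhds hk)).differentiableAt (by simp)
  have hu₁d : DifferentiableAt ℝ u₁ k :=
    (hu₁.contDiffAt (hU.mem_nhds hk)).differentiableAt (by simp)
  have hu₂d : DifferentiableAt ℝ u₂ k :=
    (hu₂.contDiffAt (hU.mem_nhds hk)).differentiableAt (by simp)
  have hlamd : DifferentiableAt ℝ lam k :=
    (hlam.contDiffAt (hU.mem_nhds hk)).differentiableAt (by simp)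
  have hmud : DifferentiableAt ℝ (fun k => (n₁ / n₂) * lam k) k :=
    (differentiableAt_const _).mul hlamd
  have hmu : ∀ v, fderiv ℝ (fun k => (n₁ / n₂) * lam k) k v
      = (n₁ / n₂) * fderiv ℝ lam k v := by
    intro v
    rw [fderiv_const_mul hlamd]
    simp
  -- unit norms at k
  have hu₁n : ⟪u₁ k, u₁ k⟫ = 1 := by
    rw [real_inner_self_eq_norm_sq, hu₁unit k hk]; norm_num
  have hu₂n : ⟪u₂ k, u₂ k⟫ = 1 := by
    rw [real_inner_self_eq_norm_sq, hu₂unit k hk]; norm_num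
  have hu₁o : ∀ v, ⟪u₁ k, fderiv ℝ u₁ k v⟫ = 0 :=
    fun v => unit_deriv_orth hU hk hu₁d hu₁unit v
  have hu₂o : ∀ v, ⟪u₂ k, fderiv ℝ u₂ k v⟫ = 0 :=
    fun v => unit_deriv_orth hU hk hu₂d hu₂unit v
  -- Snell consequence: n₂ ⟪u₂, DQ v⟫ = n₁ ⟪u₁, DQ v⟫ whenever ⟪nu, DQ v⟫ = 0
  have snell : ∀ v : ℝ × ℝ, ⟪nu k, fderiv ℝ Q k v⟫ = 0 →
      ⟪u₂ k, fderiv ℝ Q k v⟫ = (n₁ / n₂) * ⟪u₁ k, fderiv ℝ Q k v⟫ := by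
    intro v hv
    have h := congrArg (fun w : E => ⟪w, fderiv ℝ Q k v⟫) (hsnell k hk)
    simp only [inner_smul_left, inner_sub_left, RCLike.conj_to_real,
      real_inner_smul_left, hv, mul_zero, sub_zero] at h
    rw [div_mul_eq_mul_div, eq_div_iff (ne_of_gt hn₂)]
    linarith [h]
  -- incident family: fderiv lam = -⟪u₁, DQ⟫
  have hlamQ : ∀ v : ℝ × ℝ,
      ⟪u₁ k, fderiv ℝ (fun k => Q k + lam k • u₁ k) k v⟫ = 0 →
      fderiv ℝ lam k v = -⟪u₁ k, fderiv ℝ Q k v⟫ := by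
    intro v h0
    rw [inner_fderiv_add_smul Q lam u₁ k v hQd hlamd hu₁d, hu₁n, hu₁o v] at h0
    linarith [h0]
  obtain ⟨h1, h2⟩ := hlam0 k hk
  obtain ⟨ho1, ho2⟩ := horth k hk
  constructor
  · show ⟪u₂ k, fderiv ℝ _ k (1, 0)⟫ = 0
    rw [inner_fderiv_add_smul Q _ u₂ k (1, 0) hQd hmud hu₂d, hu₂n, hu₂o,
      hmu, snell (1, 0) ho1, hlamQ (1, 0) h1]
    ring
  · show ⟪u₂ k, fderiv ℝ _ k (0, 1)⟫ = 0
    rw [inner_fderiv_add_smul Q _ u₂ k (0, 1) hQd hmud hu₂d, hu₂n, hu₂o,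
      hmu, snell (0, 1) ho2, hlamQ (0, 1) h2]
    ring
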